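/- Every Hirzebruch–Jung continued fraction string for p²/(pq+1) with p > q ≥ 1 coprime (all entries ≥ 2) is obtainable from the string [2,2,2] by finitely many applications of the operations [c₁,...,c_k] ↦ [c₁+1, c₂,...,c_k, 2] and [c₁,...,c_k] ↦ [2, c₁,...,c_{k−1}, c_k+1]; conversely every string so obtained is the expansion of p²/(pq+1) for some coprime p > q ≥ 1. -/

import Mathlib

/-- Hirzebruch–Jung continued fraction `[a₁,…,a_k] = a₁ - 1/(a₂ - 1/(⋯ - 1/a_k))`.
Note `1/0 = 0` in `ℚ`, so `hj [a] = a`. -/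
def hj : List ℚ → ℚ
  | [] => 0
  | a :: l => a - 1 / hj l

/-- HJ continued fraction of a list of naturals. -/
def hjN (l : List ℕ) : ℚ := hj (l.map (fun x => (x : ℚ)))

/-- Strings obtainable from [2,2,2] via
[c₁,…,c_k] ↦ [c₁+1, c₂, …, c_k, 2] and [c₁,…,c_k] ↦ [2, c₁, …, c_{k−1}, c_k+1]. -/
inductive Gen2 : List ℕ → Prop
  | base : Gen2 [2, 2, 2]
  | left {c : ℕ} {l : List ℕ} : Gen2 (c :: l) → Gen2 ((c + 1) :: (l ++ [2]))
  | right {l : List ℕ} {c : ℕ} : Gen2 (l ++ [c]) → Gen2 (2 :: (l ++ [c + 1]))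

/-- Unbundled 2×2 integer matrices. -/
structure HJM where
  a : ℤ
  b : ℤ
  c : ℤ
  d : ℤ

def HJM.mul (x y : HJM) : HJM :=
  ⟨x.a*y.a + x.b*y.c, x.a*y.b + x.b*y.d, x.c*y.a + x.d*y.c, x.c*y.b + x.d*y.d⟩

def hjmat : List ℕ → HJM
  | [] => ⟨1, 0, 0, 1⟩
  | c :: l => HJM.mul ⟨(c : ℤ), -1, 1, 0⟩ (hjmat l)

lemma HJM.mul_assoc' (x y z : HJM) : HJM.mul (HJM.mul x y) z = HJM.mul x (HJM.mul y z) := by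
  simp only [HJM.mul, HJM.mk.injEq]
  refine ⟨by ring, by ring, by ring, by ring⟩

lemma hjmat_append (l : List ℕ) (x : ℕ) :
    hjmat (l ++ [x]) = HJM.mul (hjmat l) ⟨(x : ℤ), -1, 1, 0⟩ := by
  induction l with
  | nil =>
      simp only [List.nil_append, hjmat, HJM.mul, HJM.mk.injEq]
      refine ⟨by ring, by ring, by ring, by ring⟩
  | cons c t ih =>
      simp only [List.cons_append, hjmat, List.append_eq]
      rw [ih, HJM.mul_assoc']

/-- Target matrix for the pair `(p,q)`. -/
def Wm (p q : ℤ) : HJM := ⟨p^2, -(p*(p-q)+1), p*q+1, -(q*(p-q)+1)⟩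

lemma step_left {c : ℕ} {t : List ℕ} {p q : ℤ} (h : hjmat (c :: t) = Wm p q) :
    hjmat ((c+1) :: (t ++ [2])) = Wm (p+q) q := by
  rcases hmt : hjmat t with ⟨a, b, x, y⟩
  rw [show hjmat (c :: t) = HJM.mul ⟨(c:ℤ),-1,1,0⟩ (hjmat t) from rfl, hmt] at h
  simp only [HJM.mul, Wm, HJM.mk.injEq] at h
  obtain ⟨h1, h2, h3, h4⟩ := h
  have ha : a = p*q+1 := by linarith
  have hb : b = -(q*(p-q)+1) := by linarith
  have hx : x = (c:ℤ)*a - p^2 := by linarith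
  have hy : y = (c:ℤ)*b + (p*(p-q)+1) := by linarith
  rw [show hjmat ((c+1) :: (t ++ [2])) =
      HJM.mul ⟨((c+1:ℕ):ℤ),-1,1,0⟩ (hjmat (t ++ [2])) from rfl, hjmat_append, hmt]
  subst hx hy; subst ha hb
  simp only [HJM.mul, Wm, HJM.mk.injEq]
  push_cast
  refine ⟨by ring, by ring, by ring, by ring⟩

lemma step_right {c : ℕ} {t : List ℕ} {p q : ℤ} (h : hjmat (t ++ [c]) = Wm p q) :
    hjmat (2 :: (t ++ [c+1])) = Wm (2*p - q) p := by
  rcases hmt : hjmat t with ⟨a, b, x, y⟩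
  rw [hjmat_append, hmt] at h
  simp only [HJM.mul, Wm, HJM.mk.injEq] at h
  obtain ⟨h1, h2, h3, h4⟩ := h
  have ha : a = p*(p-q)+1 := by linarith
  have hx2 : x = q*(p-q)+1 := by linarith
  have hb : b = p^2 - (c:ℤ)*a := by linarith
  have hy : y = p*q+1 - (c:ℤ)*x := by linarith
  rw [show hjmat (2 :: (t ++ [c+1])) =
      HJM.mul ⟨((2:ℕ):ℤ),-1,1,0⟩ (hjmat (t ++ [c+1])) from rfl, hjmat_append, hmt]
  subst hb hy; subst ha hx2
  simp only [HJM.mul, Wm, HJM.mk.injEq]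
  push_cast
  refine ⟨by ring, by ring, by ring, by ring⟩

lemma gen2_entries {l : List ℕ} (h : Gen2 l) : ∀ x ∈ l, 2 ≤ x := by
  induction h with
  | base => decide
  | left _ ih =>
      intro x hx
      rcases List.mem_cons.mp hx with rfl | hx'
      · have := ih _ (List.mem_cons_self); omega
      · rcases List.mem_append.mp hx' with hx2 | hx2
        · exact ih _ (List.mem_cons_of_mem _ hx2)
        · simp only [List.mem_singleton] at hx2; omega
  | right _ ih =>
      intro x hx
      rcases List.mem_cons.mp hx with rfl | hx'
      · omega
      · rcases List.mem_append.mp hx' with hx2 | hx2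
        · exact ih _ (List.mem_append_left _ hx2)
        · simp only [List.mem_singleton] at hx2
          have := ih _ (List.mem_append_right _ (List.mem_singleton_self _)); omega

lemma gen2_mat {l : List ℕ} (h : Gen2 l) :
    ∃ p q : ℕ, 1 ≤ q ∧ q < p ∧ Nat.Coprime p q ∧ hjmat l = Wm (p:ℤ) (q:ℤ) := by
  induction h with
  | base =>
      refine ⟨2, 1, le_refl _, by omega, by decide, ?_⟩
      simp only [hjmat, HJM.mul, Wm, HJM.mk.injEq]
      norm_num
  | @left c t _ ih =>
      obtain ⟨p, q, h1, h2, hc, hm⟩ := ih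
      refine ⟨p + q, q, h1, by omega, Nat.coprime_add_self_left.mpr hc, ?_⟩
      have := step_left hm
      rwa [show ((p:ℤ) + q) = ((p+q : ℕ) : ℤ) by push_cast; ring] at this
  | @right t c _ ih =>
      obtain ⟨p, q, h1, h2, hc, hm⟩ := ih
      have hcop : Nat.Coprime (2*p - q) p := by
        have hq : Nat.gcd (2*p - q) p ∣ q := by
          have hdl := Nat.gcd_dvd_left (2*p - q) p
          have hdr := Nat.gcd_dvd_right (2*p - q) p
          have key : Nat.gcd (2*p - q) p ∣ 2*p - (2*p - q) :=
            Nat.dvd_sub (hdr.mul_left 2) hdl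
          rwa [show 2*p - (2*p - q) = q by omega] at key
        exact Nat.dvd_one.mp (hc ▸ Nat.dvd_gcd (Nat.gcd_dvd_right _ _) hq)
      refine ⟨2*p - q, p, by omega, by omega, hcop, ?_⟩
      have := step_right hm
      rwa [show (2*(p:ℤ) - q) = ((2*p - q : ℕ) : ℤ) by
        rw [Nat.cast_sub (by omega : q ≤ 2*p)]; push_cast; ring] at this

lemma hjmat_pos {l : List ℕ} (h : ∀ x ∈ l, 2 ≤ x) :
    0 ≤ (hjmat l).c ∧ (hjmat l).c < (hjmat l).a := by
  induction l with
  | nil => simp [hjmat]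
  | cons c t ih =>
      have ih' := ih (fun x hx => h x (List.mem_cons_of_mem _ hx))
      have hc : (2:ℤ) ≤ (c:ℤ) := by exact_mod_cast h c (List.mem_cons_self)
      rcases hmt : hjmat t with ⟨a, b, x, y⟩
      rw [hmt] at ih'
      simp only at ih'
      rw [show hjmat (c :: t) = HJM.mul ⟨(c:ℤ),-1,1,0⟩ (hjmat t) from rfl, hmt]
      simp only [HJM.mul]
      constructor
      · linarith [ih'.1, ih'.2]
      · nlinarith [ih'.1, ih'.2, mul_nonneg (by linarith : (0:ℤ) ≤ (c:ℤ) - 2)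
          (by linarith [ih'.1, ih'.2] : (0:ℤ) ≤ a)]

lemma hjN_nil : hjN [] = 0 := rfl

lemma hjN_cons (c : ℕ) (t : List ℕ) : hjN (c :: t) = (c : ℚ) - 1 / hjN t := rfl

lemma hjN_mat {l : List ℕ} (h : ∀ x ∈ l, 2 ≤ x) :
    hjN l = ((hjmat l).a : ℚ) / ((hjmat l).c : ℚ) := by
  induction l with
  | nil => simp [hjN_nil, hjmat]
  | cons c t ih =>
      have hpos := hjmat_pos (fun x hx => h x (List.mem_cons_of_mem _ hx))
      have ih' := ih (fun x hx => h x (List.mem_cons_of_mem _ hx))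
      rcases hmt : hjmat t with ⟨a, b, x, y⟩
      rw [hmt] at hpos ih'
      simp only at hpos ih'
      have ha : (0:ℤ) < a := by linarith [hpos.1, hpos.2]
      have haQ : ((a:ℚ)) ≠ 0 := by exact_mod_cast ha.ne'
      rw [hjN_cons, ih', show hjmat (c :: t) = HJM.mul ⟨(c:ℤ),-1,1,0⟩ (hjmat t) from rfl, hmt]
      simp only [HJM.mul]
      rw [one_div_div]
      push_cast
      field_simp
      ring_nf
      field_simp

lemma hjN_inv_bounds {t : List ℕ} (h : ∀ x ∈ t, 2 ≤ x) :
    0 ≤ 1 / hjN t ∧ 1 / hjN t < 1 := by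
  induction t with
  | nil => norm_num [hjN_nil]
  | cons c u ih =>
      have ih' := ih (fun x hx => h x (List.mem_cons_of_mem _ hx))
      have hc : (2:ℚ) ≤ (c:ℚ) := by exact_mod_cast h c (List.mem_cons_self)
      have h1 : 1 < hjN (c :: u) := by
        rw [hjN_cons]; linarith [ih'.1, ih'.2]
      constructor
      · positivity
      · rw [div_lt_one (by linarith)]; linarith

lemma hjN_gt_one {l : List ℕ} (h : ∀ x ∈ l, 2 ≤ x) (hne : l ≠ []) : 1 < hjN l := by
  cases l with
  | nil => exact absurd rfl hne
  | cons c t =>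
      have hb := hjN_inv_bounds (fun x hx => h x (List.mem_cons_of_mem _ hx))
      have hc : (2:ℚ) ≤ (c:ℚ) := by exact_mod_cast h c (List.mem_cons_self)
      rw [hjN_cons]; linarith [hb.1, hb.2]

lemma hjN_inj : ∀ (l l' : List ℕ), (∀ x ∈ l, 2 ≤ x) → (∀ x ∈ l', 2 ≤ x) →
    hjN l = hjN l' → l = l' := by
  intro l
  induction l with
  | nil =>
      intro l' _ h' heq
      cases l' with
      | nil => rfl
      | cons c t =>
          exfalso
          have := hjN_gt_one h' (by simp)
          rw [← heq, hjN_nil] at this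
          norm_num at this
  | cons c t ih =>
      intro l' h h' heq
      cases l' with
      | nil =>
          exfalso
          have := hjN_gt_one h (by simp)
          rw [heq, hjN_nil] at this
          norm_num at this
      | cons c' t' =>
          have ht : ∀ x ∈ t, 2 ≤ x := fun x hx => h x (List.mem_cons_of_mem _ hx)
          have ht' : ∀ x ∈ t', 2 ≤ x := fun x hx => h' x (List.mem_cons_of_mem _ hx)
          have hb := hjN_inv_bounds ht
          have hb' := hjN_inv_bounds ht'
          rw [hjN_cons, hjN_cons] at heq
          have hcc : c = c' := by
            have h1 : (c:ℚ) - 1 < (c':ℚ) := by linarith [hb.1, hb.2, hb'.1, hb'.2]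
            have h2 : (c':ℚ) - 1 < (c:ℚ) := by linarith [hb.1, hb.2, hb'.1, hb'.2]
            have : (c:ℤ) = (c':ℤ) := by
              have h1' : (c:ℤ) - 1 < (c':ℤ) := by exact_mod_cast h1
              have h2' : (c':ℤ) - 1 < (c:ℤ) := by exact_mod_cast h2
              omega
            exact_mod_cast this
          subst hcc
          have hinv : 1 / hjN t = 1 / hjN t' := by linarith
          have htt : hjN t = hjN t' := by
            cases t with
            | nil =>
                cases t' with
                | nil => rfl
                | cons a u =>
                    exfalso
                    have hg := hjN_gt_one ht' (by simp)
                    have hpos : 0 < 1 / hjN (a :: u) := one_div_pos.mpr (by linarith)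
                    rw [← hinv, hjN_nil] at hpos
                    norm_num at hpos
            | cons a u =>
                cases t' with
                | nil =>
                    exfalso
                    have hg := hjN_gt_one ht (by simp)
                    have hpos : 0 < 1 / hjN (a :: u) := one_div_pos.mpr (by linarith)
                    rw [hinv, hjN_nil] at hpos
                    norm_num at hpos
                | cons a' u' =>
                    have hg := hjN_gt_one ht (by simp)
                    have hg' := hjN_gt_one ht' (by simp)
                    have hne : hjN (a :: u) ≠ 0 := by linarith
                    have hne' : hjN (a' :: u') ≠ 0 := by linarith
                    field_simp at hinv
                    linarith [hinv]
          exact congrArg (c :: ·) (ih t' ht ht' htt)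

lemma exists_gen (p : ℕ) : ∀ q : ℕ, 1 ≤ q → q < p → Nat.Coprime p q →
    ∃ l, Gen2 l ∧ hjmat l = Wm (p:ℤ) (q:ℤ) := by
  induction p using Nat.strong_induction_on with
  | _ p ih =>
    intro q h1 h2 hc
    rcases lt_trichotomy p (2*q) with hlt | heq | hgt
    · -- q < p < 2q, use right step from (q, 2q - p)
      have hq2 : 2 ≤ q := by omega
      have hcop' : Nat.Coprime q (2*q - p) := by
        have hp : Nat.gcd q (2*q - p) ∣ p := by
          have hdl := Nat.gcd_dvd_left q (2*q - p)
          have hdr := Nat.gcd_dvd_right q (2*q - p)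
          have key : Nat.gcd q (2*q - p) ∣ 2*q - (2*q - p) :=
            Nat.dvd_sub (hdl.mul_left 2) hdr
          rwa [show 2*q - (2*q - p) = p by omega] at key
        have : Nat.gcd q (2*q - p) ∣ Nat.gcd p q :=
          Nat.dvd_gcd hp (Nat.gcd_dvd_left _ _)
        exact Nat.dvd_one.mp (hc ▸ this)
      obtain ⟨l, hg, hm⟩ := ih q h2 (2*q - p) (by omega) (by omega) hcop'
      have hne : l ≠ [] := by
        intro hnil
        rw [hnil] at hm
        simp only [hjmat, Wm, HJM.mk.injEq] at hm
        have : (1:ℤ) = (q:ℤ)^2 := hm.1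
        have hq2' : (2:ℤ) ≤ (q:ℤ) := by exact_mod_cast hq2
        nlinarith
      obtain ⟨t, c0, hl⟩ : ∃ t c0, l = t ++ [c0] := by
        rcases List.eq_nil_or_concat l with rfl | ⟨u, x, rfl⟩
        · exact absurd rfl hne
        · exact ⟨u, x, List.concat_eq_append⟩
      subst hl
      refine ⟨2 :: (t ++ [c0 + 1]), Gen2.right hg, ?_⟩
      have := step_right hm
      rwa [show 2*(q:ℤ) - ((2*q - p : ℕ) : ℤ) = (p:ℤ) by
        rw [Nat.cast_sub (by omega : p ≤ 2*q)]; push_cast; ring] at this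
    · -- p = 2q forces q = 1, p = 2
      have hq1 : q = 1 := by
        have hdvd : q ∣ p := ⟨2, by omega⟩
        exact Nat.dvd_one.mp (hc ▸ Nat.dvd_gcd hdvd dvd_rfl)
      have hp2 : p = 2 := by omega
      subst hq1 hp2
      refine ⟨[2, 2, 2], Gen2.base, ?_⟩
      simp only [hjmat, HJM.mul, Wm, HJM.mk.injEq]
      norm_num
    · -- p > 2q, use left step from (p - q, q)
      have hcop' : Nat.Coprime (p - q) q := by
        have : Nat.Coprime ((p - q) + q) q := by
          rw [show (p - q) + q = p by omega]; exact hc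
        exact Nat.coprime_add_self_left.mp this
      obtain ⟨l, hg, hm⟩ := ih (p - q) (by omega) q h1 (by omega) hcop'
      have hne : l ≠ [] := by
        intro hnil
        rw [hnil] at hm
        simp only [hjmat, Wm, HJM.mk.injEq] at hm
        have h1' : (1:ℤ) = ((p - q : ℕ):ℤ)^2 := hm.1
        have : (2:ℤ) ≤ ((p - q : ℕ):ℤ) := by exact_mod_cast (by omega : 2 ≤ p - q)
        nlinarith
      obtain ⟨c0, t, hl⟩ : ∃ c0 t, l = c0 :: t := by
        cases l with
        | nil => exact absurd rfl hne
        | cons a b => exact ⟨a, b, rfl⟩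
      subst hl
      refine ⟨(c0 + 1) :: (t ++ [2]), Gen2.left hg, ?_⟩
      have := step_left hm
      rwa [show ((p - q : ℕ):ℤ) + (q:ℤ) = (p:ℤ) by
        rw [Nat.cast_sub (by omega : q ≤ p)]; ring] at this

theorem stmt18 (l : List ℕ) :
    Gen2 l ↔
      ((∀ x ∈ l, 2 ≤ x) ∧
        ∃ p q : ℕ, 1 ≤ q ∧ q < p ∧ Nat.Coprime p q ∧
          hjN l = ((p ^ 2 : ℕ) : ℚ) / ((p * q + 1 : ℕ) : ℚ)) := by
  constructor
  · intro h
    obtain ⟨p, q, h1, h2, hc, hm⟩ := gen2_mat h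
    have hent := gen2_entries h
    refine ⟨hent, p, q, h1, h2, hc, ?_⟩
    rw [hjN_mat hent, hm]
    simp only [Wm]
    push_cast
    ring_nf
  · rintro ⟨hent, p, q, h1, h2, hc, hval⟩
    obtain ⟨l', hg, hm⟩ := exists_gen p q h1 h2 hc
    have hent' := gen2_entries hg
    have hval' : hjN l' = ((p ^ 2 : ℕ) : ℚ) / ((p * q + 1 : ℕ) : ℚ) := by
      rw [hjN_mat hent', hm]
      simp only [Wm]
      push_cast
      ring_nf
    have : l = l' := hjN_inj l l' hent hent' (hval.trans hval'.symm)
    rw [this]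
    exact hg
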